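/- arXiv:1010.1133 — 2 statements merged into one kernel-verified Lean document; each statement's English description precedes it below -/
import Mathlib

section
/- Let h = g ∘ ρ^{-1} : [0,1] → R, where g(φ) = (2φ - sin 2φ)/(2φ²) (g(0)=0) and ρ(φ) = sin(φ)/φ (ρ(0)=1) on [0,π]. Then for all r ∈ [0,1), h'(r) = -2 cos(φ)/φ where φ = ρ^{-1}(r) ∈ (0,π]. Consequently h is increasing on [0, 2/π] from 1/π to 2/π and decreasing on [2/π, 1] from 2/π to 0. -/
open scoped Real

noncomputable section

/-- The function `g(φ) = (2φ - sin 2φ)/(2φ²)`, `g(0) = 0`. -/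
def gProf (φ : ℝ) : ℝ := if φ = 0 then 0 else (2 * φ - Real.sin (2 * φ)) / (2 * φ ^ 2)

/-- The function `ρ(φ) = sin φ / φ`, `ρ(0) = 1`. -/
def rhoProf (φ : ℝ) : ℝ := if φ = 0 then 1 else Real.sin φ / φ

/-- The inverse `ρ⁻¹ : [0,1] → [0,π]` of `ρ` on `[0,π]`. -/
def rhoInv : ℝ → ℝ := Function.invFunOn rhoProf (Set.Icc 0 π)

/-- The profile function `h = g ∘ ρ⁻¹` of the unit Carnot–Carathéodory ball:
`B̄(0,1) = {[z,t] : ‖z‖ ≤ 1, |t| ≤ h(‖z‖)}`. -/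
def hProf : ℝ → ℝ := fun r => gProf (rhoInv r)

open Set Filter

/-- sin φ - φ cos φ -/
def uAux (φ : ℝ) : ℝ := Real.sin φ - φ * Real.cos φ

def rho' (φ : ℝ) : ℝ := (φ * Real.cos φ - Real.sin φ) / φ ^ 2

def g' (φ : ℝ) : ℝ := 2 * Real.cos φ * (Real.sin φ - φ * Real.cos φ) / φ ^ 3

lemma hasDerivAt_uAux (φ : ℝ) : HasDerivAt uAux (φ * Real.sin φ) φ := by
  have h := (Real.hasDerivAt_sin φ).sub ((hasDerivAt_id φ).mul (Real.hasDerivAt_cos φ))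
  convert h using 1
  all_goals first | rfl | (funext x; simp [uAux]) | (simp; ring) | simp

lemma uAux_pos {φ : ℝ} (h0 : 0 < φ) (hπ : φ ≤ π) : 0 < uAux φ := by
  have hmono : StrictMonoOn uAux (Icc 0 π) := by
    apply strictMonoOn_of_deriv_pos (convex_Icc 0 π)
    · exact fun x _ => (hasDerivAt_uAux x).continuousAt.continuousWithinAt
    · intro x hx
      rw [interior_Icc] at hx
      rw [(hasDerivAt_uAux x).deriv]
      exact mul_pos hx.1 (Real.sin_pos_of_pos_of_lt_pi hx.1 hx.2)
  have := hmono (left_mem_Icc.2 Real.pi_pos.le) ⟨h0.le, hπ⟩ h0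
  simpa [uAux] using this

lemma hasDerivAt_rhoProf {φ : ℝ} (hφ : φ ≠ 0) : HasDerivAt rhoProf (rho' φ) φ := by
  have h : HasDerivAt (fun x => Real.sin x / x)
      ((Real.cos φ * φ - Real.sin φ * 1) / φ ^ 2) φ :=
    (Real.hasDerivAt_sin φ).div (hasDerivAt_id φ) hφ
  have heq : rhoProf =ᶠ[nhds φ] fun x => Real.sin x / x := by
    filter_upwards [isOpen_compl_singleton.mem_nhds hφ] with x hx
    simp only [Set.mem_compl_iff, Set.mem_singleton_iff] at hx
    simp [rhoProf, hx]
  refine (h.congr_of_eventuallyEq heq).congr_deriv ?_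
  unfold rho'; ring

lemma hasDerivAt_gProf {φ : ℝ} (hφ : φ ≠ 0) : HasDerivAt gProf (g' φ) φ := by
  have hnum : HasDerivAt (fun x : ℝ => 2 * x - Real.sin (2 * x))
      (2 - Real.cos (2 * φ) * 2) φ := by
    have hs : HasDerivAt (fun x : ℝ => Real.sin (2 * x)) (Real.cos (2 * φ) * 2) φ := by
      have := (Real.hasDerivAt_sin (2 * φ)).comp φ ((hasDerivAt_id φ).const_mul 2)
      simpa [Function.comp_def] using this
    simpa [Pi.sub_def] using ((hasDerivAt_id φ).const_mul 2).sub hs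
  have hden : HasDerivAt (fun x : ℝ => 2 * x ^ 2) (2 * (2 * φ)) φ := by
    simpa using ((hasDerivAt_pow 2 φ).const_mul 2)
  have h := hnum.div hden (by positivity)
  have heq : gProf =ᶠ[nhds φ] fun x => (2 * x - Real.sin (2 * x)) / (2 * x ^ 2) := by
    filter_upwards [isOpen_compl_singleton.mem_nhds hφ] with x hx
    simp only [Set.mem_compl_iff, Set.mem_singleton_iff] at hx
    simp [gProf, hx]
  refine (h.congr_of_eventuallyEq heq).congr_deriv ?_
  rw [Real.cos_two_mul, Real.sin_two_mul]
  unfold g'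
  field_simp
  ring

lemma rhoProf_zero : rhoProf 0 = 1 := by simp [rhoProf]

lemma rhoProf_pi : rhoProf π = 0 := by
  simp [rhoProf, Real.pi_ne_zero, Real.sin_pi]

lemma rhoProf_pi_div_two : rhoProf (π / 2) = 2 / π := by
  have : (π / 2 : ℝ) ≠ 0 := by positivity
  rw [rhoProf, if_neg this, Real.sin_pi_div_two]
  field_simp

lemma gProf_zero : gProf 0 = 0 := by simp [gProf]

lemma gProf_pi : gProf π = 1 / π := by
  rw [gProf, if_neg Real.pi_ne_zero]
  rw [show (2:ℝ) * π = 2 * π by rfl, Real.sin_two_pi]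
  rw [sq]
  field_simp
  ring

lemma gProf_pi_div_two : gProf (π / 2) = 2 / π := by
  have h : (π / 2 : ℝ) ≠ 0 := by positivity
  rw [gProf, if_neg h, show 2 * (π / 2) = π by ring, Real.sin_pi]
  have := Real.pi_ne_zero
  field_simp
  ring

lemma continuousAt_rhoProf_zero : ContinuousAt rhoProf 0 := by
  rw [← continuousWithinAt_compl_self]
  have h : Tendsto (slope Real.sin 0) (nhdsWithin 0 {(0:ℝ)}ᶜ) (nhds 1) := by
    have := hasDerivAt_iff_tendsto_slope.1 (Real.hasDerivAt_sin 0)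
    simpa using this
  rw [ContinuousWithinAt, rhoProf_zero]
  refine h.congr' ?_
  filter_upwards [self_mem_nhdsWithin] with x (hx : x ≠ 0)
  simp [slope_def_field, rhoProf, hx]

lemma continuousOn_rhoProf : ContinuousOn rhoProf (Icc 0 π) := by
  intro x hx
  rcases eq_or_ne x 0 with rfl | hx0
  · exact continuousAt_rhoProf_zero.continuousWithinAt
  · exact (hasDerivAt_rhoProf hx0).continuousAt.continuousWithinAt

lemma strictAntiOn_rhoProf : StrictAntiOn rhoProf (Icc 0 π) := by
  apply strictAntiOn_of_deriv_neg (convex_Icc 0 π) continuousOn_rhoProf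
  intro x hx
  rw [interior_Icc] at hx
  rw [(hasDerivAt_rhoProf hx.1.ne').deriv]
  have hu := uAux_pos hx.1 hx.2.le
  unfold rho' uAux at *
  have : x * Real.cos x - Real.sin x < 0 := by linarith
  exact div_neg_of_neg_of_pos this (pow_pos hx.1 2)

lemma rho_surj : Icc (0:ℝ) 1 ⊆ rhoProf '' Icc 0 π := by
  have h := intermediate_value_Icc' Real.pi_pos.le continuousOn_rhoProf
  rwa [rhoProf_pi, rhoProf_zero] at h

lemma rhoInv_mem {r : ℝ} (hr : r ∈ Icc 0 1) : rhoInv r ∈ Icc 0 π := by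
  obtain ⟨φ, hφ, hφr⟩ := rho_surj hr
  exact Function.invFunOn_mem ⟨φ, hφ, hφr⟩

lemma rho_rhoInv {r : ℝ} (hr : r ∈ Icc 0 1) : rhoProf (rhoInv r) = r := by
  obtain ⟨φ, hφ, hφr⟩ := rho_surj hr
  exact Function.invFunOn_eq ⟨φ, hφ, hφr⟩

lemma rhoInv_rho {φ : ℝ} (hφ : φ ∈ Icc 0 π) : rhoInv (rhoProf φ) = φ :=
  strictAntiOn_rhoProf.injOn.leftInvOn_invFunOn hφ

lemma rhoProf_mem {φ : ℝ} (hφ : φ ∈ Icc 0 π) : rhoProf φ ∈ Icc 0 1 := by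
  constructor
  · rcases eq_or_lt_of_le hφ.2 with heq | h
    · rw [heq, rhoProf_pi]
    · have := strictAntiOn_rhoProf.antitoneOn hφ (right_mem_Icc.2 Real.pi_pos.le) hφ.2
      rwa [rhoProf_pi] at this
  · have := strictAntiOn_rhoProf.antitoneOn (left_mem_Icc.2 Real.pi_pos.le) hφ hφ.1
    rwa [rhoProf_zero] at this

lemma le_of_rho_le {φ ψ : ℝ} (hφ : φ ∈ Icc 0 π) (hψ : ψ ∈ Icc 0 π)
    (h : rhoProf φ ≤ rhoProf ψ) : ψ ≤ φ := by
  by_contra hlt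
  push_neg at hlt
  exact absurd (strictAntiOn_rhoProf hφ hψ hlt) (not_lt.2 h)

lemma rhoInv_zero : rhoInv 0 = π := by
  rw [← rhoProf_pi, rhoInv_rho (right_mem_Icc.2 Real.pi_pos.le)]

lemma rhoInv_one : rhoInv 1 = 0 := by
  rw [← rhoProf_zero, rhoInv_rho (left_mem_Icc.2 Real.pi_pos.le)]

lemma pi_div_two_mem : (π / 2) ∈ Icc (0:ℝ) π := by
  constructor <;> [positivity; linarith [Real.pi_pos]]

lemma rhoInv_two_div_pi : rhoInv (2 / π) = π / 2 := by
  rw [← rhoProf_pi_div_two, rhoInv_rho pi_div_two_mem]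

lemma two_div_pi_mem : (2 / π) ∈ Icc (0:ℝ) 1 := by
  constructor
  · positivity
  · rw [div_le_one Real.pi_pos]; exact Real.two_le_pi

lemma continuousWithinAt_rhoInv {r : ℝ} (hr : r ∈ Icc 0 1) :
    ContinuousWithinAt rhoInv (Icc 0 1) r := by
  have hφ₀m : rhoInv r ∈ Icc 0 π := rhoInv_mem hr
  set φ₀ := rhoInv r with hφ₀
  have hρφ₀ : rhoProf φ₀ = r := rho_rhoInv hr
  rw [ContinuousWithinAt, Metric.tendsto_nhdsWithin_nhds]
  intro ε hε
  set a := max 0 (φ₀ - ε / 2) with ha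
  set b := min π (φ₀ + ε / 2) with hb
  have ha0 : a ∈ Icc 0 π := ⟨le_max_left _ _, max_le Real.pi_pos.le (by linarith [hφ₀m.2])⟩
  have hb0 : b ∈ Icc 0 π := ⟨le_min Real.pi_pos.le (by linarith [hφ₀m.1]), min_le_left _ _⟩
  have haφ : a ≤ φ₀ := max_le hφ₀m.1 (by linarith)
  have hφb : φ₀ ≤ b := le_min hφ₀m.2 (by linarith)
  have haε : φ₀ - ε / 2 ≤ a := le_max_right _ _
  have hbε : b ≤ φ₀ + ε / 2 := min_le_right _ _
  set δ₁ := if φ₀ = π then 1 else r - rhoProf b with hδ₁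
  set δ₂ := if φ₀ = 0 then 1 else rhoProf a - r with hδ₂
  have hδ₁pos : 0 < δ₁ := by
    rw [hδ₁]
    split_ifs with h
    · norm_num
    · have hφ₀b : φ₀ < b := lt_min (lt_of_le_of_ne hφ₀m.2 h) (by linarith)
      have := strictAntiOn_rhoProf hφ₀m hb0 hφ₀b
      rw [hρφ₀] at this
      linarith
  have hδ₂pos : 0 < δ₂ := by
    rw [hδ₂]
    split_ifs with h
    · norm_num
    · have haφ₀ : a < φ₀ := by
        rcases lt_or_ge 0 (φ₀ - ε / 2) with h' | h'
        · rw [ha, max_eq_right h'.le]; linarith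
        · rw [ha, max_eq_left h']
          exact lt_of_le_of_ne hφ₀m.1 (Ne.symm h)
      have := strictAntiOn_rhoProf ha0 hφ₀m haφ₀
      rw [hρφ₀] at this
      linarith
  refine ⟨min δ₁ δ₂, lt_min hδ₁pos hδ₂pos, fun y hy hyd => ?_⟩
  have hφm : rhoInv y ∈ Icc 0 π := rhoInv_mem hy
  set φ := rhoInv y with hφ
  have hρφ : rhoProf φ = y := rho_rhoInv hy
  rw [Real.dist_eq] at hyd ⊢
  have hyd₁ : |y - r| < δ₁ := hyd.trans_le (min_le_left _ _)
  have hyd₂ : |y - r| < δ₂ := hyd.trans_le (min_le_right _ _)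
  -- lower bound: rhoProf b ≤ y
  have h1 : rhoProf b ≤ y := by
    by_cases h : φ₀ = π
    · have hbπ : b = π := by rw [hb, h]; exact min_eq_left (by linarith)
      rw [hbπ, rhoProf_pi]; exact hy.1
    · rw [hδ₁, if_neg h] at hyd₁
      have := abs_lt.1 hyd₁
      linarith [this.1]
  -- upper bound: y ≤ rhoProf a
  have h2 : y ≤ rhoProf a := by
    by_cases h : φ₀ = 0
    · have ha0' : a = 0 := by rw [ha, h]; exact max_eq_left (by linarith)
      rw [ha0', rhoProf_zero]; exact hy.2
    · rw [hδ₂, if_neg h] at hyd₂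
      have := abs_lt.1 hyd₂
      linarith [this.2]
  have hl : a ≤ φ := le_of_rho_le hφm ha0 (by rw [hρφ]; exact h2)
  have hu : φ ≤ b := le_of_rho_le hb0 hφm (by rw [hρφ]; exact h1)
  rw [abs_lt]
  constructor <;> linarith

lemma strictAntiOn_rhoInv : StrictAntiOn rhoInv (Icc 0 1) := by
  intro r1 h1 r2 h2 hlt
  have hm1 := rhoInv_mem h1
  have hm2 := rhoInv_mem h2
  by_contra hle
  push_neg at hle
  have := strictAntiOn_rhoProf.antitoneOn hm1 hm2 hle
  rw [rho_rhoInv h1, rho_rhoInv h2] at this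
  linarith

lemma continuousOn_gProf : ContinuousOn gProf (Icc 0 π) := by
  intro x hx
  rcases eq_or_ne x 0 with rfl | hx0
  · rw [← continuousWithinAt_diff_self, ContinuousWithinAt, gProf_zero]
    have h0 : ∀ᶠ t in nhdsWithin (0:ℝ) (Icc 0 π \ {0}), 0 ≤ gProf t := by
      filter_upwards [self_mem_nhdsWithin] with t ht
      have ht0 : 0 < t := lt_of_le_of_ne ht.1.1 (Ne.symm ht.2)
      have hs : Real.sin (2 * t) < 2 * t := Real.sin_lt (by linarith)
      rw [gProf, if_neg ht0.ne']
      apply div_nonneg (by linarith) (by positivity)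
    have hle : ∀ᶠ t in nhdsWithin (0:ℝ) (Icc 0 π \ {0}), gProf t ≤ (fun t => t) t := by
      have hball : ∀ᶠ t in nhdsWithin (0:ℝ) (Icc 0 π \ {0}), |t| < 1/2 :=
        eventually_nhdsWithin_of_eventually_nhds
          (Metric.eventually_nhds_iff_ball.2 ⟨1/2, by norm_num,
            fun y hy => by simpa [Real.dist_eq] using hy⟩)
      filter_upwards [self_mem_nhdsWithin, hball] with t ht htb
      have ht0 : 0 < t := lt_of_le_of_ne ht.1.1 (Ne.symm ht.2)
      have htle : 2 * t ≤ 1 := by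
        rw [abs_lt] at htb; linarith [htb.2]
      have hcube := Real.sin_gt_sub_cube (by linarith : (0:ℝ) < 2 * t)
      show gProf t ≤ t
      rw [gProf, if_neg ht0.ne', div_le_iff₀ (by positivity)]
      nlinarith [hcube]
    exact squeeze_zero' h0 hle (tendsto_id.mono_left nhdsWithin_le_nhds)
  · exact (hasDerivAt_gProf hx0).continuousAt.continuousWithinAt

lemma Icc_half_subset : Icc (0:ℝ) (π/2) ⊆ Icc 0 π :=
  Icc_subset_Icc le_rfl (by linarith [Real.pi_pos])

lemma Icc_half_subset' : Icc (π/2) π ⊆ Icc (0:ℝ) π :=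
  Icc_subset_Icc (by positivity) le_rfl

lemma strictMonoOn_gProf : StrictMonoOn gProf (Icc 0 (π/2)) := by
  apply strictMonoOn_of_deriv_pos (convex_Icc _ _) (continuousOn_gProf.mono Icc_half_subset)
  intro x hx
  rw [interior_Icc] at hx
  obtain ⟨hx1, hx2⟩ := hx
  rw [(hasDerivAt_gProf hx1.ne').deriv]
  have hπ := Real.pi_pos
  have hcos : 0 < Real.cos x := Real.cos_pos_of_mem_Ioo ⟨by linarith, hx2⟩
  have hu : 0 < uAux x := uAux_pos hx1 (by linarith)
  unfold g'; unfold uAux at hu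
  exact div_pos (by nlinarith [mul_pos hcos hu]) (pow_pos hx1 3)

lemma strictAntiOn_gProf : StrictAntiOn gProf (Icc (π/2) π) := by
  apply strictAntiOn_of_deriv_neg (convex_Icc _ _) (continuousOn_gProf.mono Icc_half_subset')
  intro x hx
  rw [interior_Icc] at hx
  obtain ⟨hx1, hx2⟩ := hx
  have hπ := Real.pi_pos
  have hx0 : 0 < x := lt_trans (by positivity) hx1
  rw [(hasDerivAt_gProf hx0.ne').deriv]
  have hcos : Real.cos x < 0 :=
    Real.cos_neg_of_pi_div_two_lt_of_lt hx1 (by linarith)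
  have hu : 0 < uAux x := uAux_pos hx0 hx2.le
  unfold g'; unfold uAux at hu
  exact div_neg_of_neg_of_pos
    (by nlinarith [mul_pos (neg_pos.2 hcos) hu]) (pow_pos hx0 3)

lemma image_g1 : gProf '' Icc 0 (π/2) = Icc 0 (2/π) := by
  apply Subset.antisymm
  · rintro _ ⟨φ, hφ, rfl⟩
    constructor
    · have := strictMonoOn_gProf.monotoneOn (left_mem_Icc.2 (by positivity)) hφ hφ.1
      rwa [gProf_zero] at this
    · have := strictMonoOn_gProf.monotoneOn hφ (right_mem_Icc.2 (by positivity)) hφ.2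
      rwa [gProf_pi_div_two] at this
  · have h := intermediate_value_Icc (by positivity : (0:ℝ) ≤ π/2)
      (continuousOn_gProf.mono Icc_half_subset)
    rwa [gProf_zero, gProf_pi_div_two] at h

lemma image_g2 : gProf '' Icc (π/2) π = Icc (1/π) (2/π) := by
  have hle : (π/2:ℝ) ≤ π := by linarith [Real.pi_pos]
  apply Subset.antisymm
  · rintro _ ⟨φ, hφ, rfl⟩
    constructor
    · have := strictAntiOn_gProf.antitoneOn hφ (right_mem_Icc.2 hle) hφ.2
      rwa [gProf_pi] at this
    · have := strictAntiOn_gProf.antitoneOn (left_mem_Icc.2 hle) hφ hφ.1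
      rwa [gProf_pi_div_two] at this
  · have h := intermediate_value_Icc' hle (continuousOn_gProf.mono Icc_half_subset')
    rwa [gProf_pi, gProf_pi_div_two] at h

lemma image_rhoInv1 : rhoInv '' Icc 0 (2/π) = Icc (π/2) π := by
  apply Subset.antisymm
  · rintro _ ⟨y, hy, rfl⟩
    have hy' : y ∈ Icc (0:ℝ) 1 := ⟨hy.1, hy.2.trans two_div_pi_mem.2⟩
    refine ⟨?_, (rhoInv_mem hy').2⟩
    apply le_of_rho_le (rhoInv_mem hy') pi_div_two_mem
    rw [rho_rhoInv hy', rhoProf_pi_div_two]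
    exact hy.2
  · intro φ hφ
    have hφ' : φ ∈ Icc (0:ℝ) π := ⟨le_trans (by positivity) hφ.1, hφ.2⟩
    refine ⟨rhoProf φ, ⟨(rhoProf_mem hφ').1, ?_⟩, rhoInv_rho hφ'⟩
    rw [← rhoProf_pi_div_two]
    exact strictAntiOn_rhoProf.antitoneOn pi_div_two_mem hφ' hφ.1

lemma image_rhoInv2 : rhoInv '' Icc (2/π) 1 = Icc 0 (π/2) := by
  apply Subset.antisymm
  · rintro _ ⟨y, hy, rfl⟩
    have hy' : y ∈ Icc (0:ℝ) 1 := ⟨le_trans two_div_pi_mem.1 hy.1, hy.2⟩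
    refine ⟨(rhoInv_mem hy').1, ?_⟩
    apply le_of_rho_le pi_div_two_mem (rhoInv_mem hy')
    rw [rho_rhoInv hy', rhoProf_pi_div_two]
    exact hy.1
  · intro φ hφ
    have hφ' : φ ∈ Icc (0:ℝ) π := ⟨hφ.1, hφ.2.trans (by linarith [Real.pi_pos])⟩
    refine ⟨rhoProf φ, ⟨?_, (rhoProf_mem hφ').2⟩, rhoInv_rho hφ'⟩
    rw [← rhoProf_pi_div_two]
    exact strictAntiOn_rhoProf.antitoneOn hφ' pi_div_two_mem hφ.2

lemma hasDerivWithinAt_hProf {r : ℝ} (hr : r ∈ Ico 0 1) :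
    HasDerivWithinAt hProf (-2 * Real.cos (rhoInv r) / rhoInv r) (Icc 0 1) r := by
  have hr' : r ∈ Icc (0:ℝ) 1 := ⟨hr.1, hr.2.le⟩
  have hφ₀m : rhoInv r ∈ Icc 0 π := rhoInv_mem hr'
  set φ₀ := rhoInv r with hφ₀def
  have hρφ₀ : rhoProf φ₀ = r := rho_rhoInv hr'
  have hφ₀ne : φ₀ ≠ 0 := by
    intro h
    rw [h, rhoProf_zero] at hρφ₀
    exact absurd hρφ₀.symm hr.2.ne
  have hφ₀pos : 0 < φ₀ := lt_of_le_of_ne hφ₀m.1 (Ne.symm hφ₀ne)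
  have hu : 0 < uAux φ₀ := uAux_pos hφ₀pos hφ₀m.2
  have hρ'ne : rho' φ₀ ≠ 0 := by
    unfold rho'; unfold uAux at hu
    apply ne_of_lt
    apply div_neg_of_neg_of_pos (by linarith) (pow_pos hφ₀pos 2)
  -- rhoInv tends into the punctured interval
  have h1 : Tendsto rhoInv (nhdsWithin r (Icc 0 1 \ {r}))
      (nhdsWithin φ₀ (Icc 0 π \ {φ₀})) := by
    rw [tendsto_nhdsWithin_iff]
    constructor
    · exact (continuousWithinAt_rhoInv hr').mono diff_subset
    · filter_upwards [self_mem_nhdsWithin] with y hy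
      have hy' : y ∈ Icc (0:ℝ) 1 := hy.1
      refine ⟨rhoInv_mem hy', ?_⟩
      simp only [mem_singleton_iff]
      intro heq
      apply hy.2
      have : rhoProf (rhoInv y) = rhoProf φ₀ := by rw [heq]
      rw [rho_rhoInv hy', hρφ₀] at this
      simp [this]
  have h1' : Tendsto rhoInv (nhdsWithin r (Icc 0 1 \ {r})) (nhdsWithin φ₀ {φ₀}ᶜ) :=
    h1.mono_right (nhdsWithin_mono _ (fun x hx => hx.2))
  have h2 : Tendsto (slope gProf φ₀) (nhdsWithin φ₀ {φ₀}ᶜ) (nhds (g' φ₀)) :=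
    hasDerivAt_iff_tendsto_slope.1 (hasDerivAt_gProf hφ₀ne)
  have h3 : Tendsto (slope rhoProf φ₀) (nhdsWithin φ₀ {φ₀}ᶜ) (nhds (rho' φ₀)) :=
    hasDerivAt_iff_tendsto_slope.1 (hasDerivAt_rhoProf hφ₀ne)
  have h4 : Tendsto (fun y => slope gProf φ₀ (rhoInv y) / slope rhoProf φ₀ (rhoInv y))
      (nhdsWithin r (Icc 0 1 \ {r})) (nhds (g' φ₀ / rho' φ₀)) :=
    (h2.comp h1').div (h3.comp h1') hρ'ne
  have key : HasDerivWithinAt hProf (g' φ₀ / rho' φ₀) (Icc 0 1) r := by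
    rw [hasDerivWithinAt_iff_tendsto_slope]
    refine h4.congr' ?_
    filter_upwards [self_mem_nhdsWithin] with y hy
    have hy' : y ∈ Icc (0:ℝ) 1 := hy.1
    have hyr : y ≠ r := hy.2
    have hρφ : rhoProf (rhoInv y) = y := rho_rhoInv hy'
    have hφne : rhoInv y ≠ φ₀ := by
      intro heq
      apply hyr
      rw [← hρφ, heq, hρφ₀]
    have hsub1 : rhoInv y - φ₀ ≠ 0 := sub_ne_zero.2 hφne
    have hsub2 : y - r ≠ 0 := sub_ne_zero.2 hyr
    rw [slope_def_field, slope_def_field, slope_def_field, hρφ, hρφ₀]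
    show _ = (gProf (rhoInv y) - gProf (rhoInv r)) / (y - r)
    rw [← hφ₀def]
    field_simp
  have heq : g' φ₀ / rho' φ₀ = -2 * Real.cos φ₀ / φ₀ := by
    unfold g' rho'
    unfold uAux at hu
    have hnum : φ₀ * Real.cos φ₀ - Real.sin φ₀ ≠ 0 := by linarith
    have hnum' : Real.cos φ₀ * φ₀ - Real.sin φ₀ ≠ 0 := by linarith
    field_simp
    ring
  rwa [heq] at key

/-- For all `r ∈ [0,1)`, `h'(r) = -2 cos φ / φ` where `φ = ρ⁻¹(r)`; consequently `h` is
increasing on `[0,2/π]` from `1/π` onto `2/π` and decreasing on `[2/π,1]` from `2/π`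
onto `0`. -/
theorem stmt6 :
    (∀ r ∈ Set.Ico (0 : ℝ) 1,
      derivWithin hProf (Set.Icc 0 1) r = -2 * Real.cos (rhoInv r) / rhoInv r) ∧
    StrictMonoOn hProf (Set.Icc 0 (2 / π)) ∧
    hProf '' Set.Icc 0 (2 / π) = Set.Icc (1 / π) (2 / π) ∧
    StrictAntiOn hProf (Set.Icc (2 / π) 1) ∧
    hProf '' Set.Icc (2 / π) 1 = Set.Icc 0 (2 / π) := by
  have himg : ∀ s : Set ℝ, hProf '' s = gProf '' (rhoInv '' s) := by
    intro s
    rw [show hProf = gProf ∘ rhoInv from rfl, Set.image_comp]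
  refine ⟨?_, ?_, ?_, ?_, ?_⟩
  · intro r hr
    exact (hasDerivWithinAt_hProf hr).derivWithin (uniqueDiffOn_Icc one_pos r ⟨hr.1, hr.2.le⟩)
  · intro r1 h1 r2 h2 hlt
    have h1' : r1 ∈ Icc (0:ℝ) 1 := ⟨h1.1, h1.2.trans two_div_pi_mem.2⟩
    have h2' : r2 ∈ Icc (0:ℝ) 1 := ⟨h2.1, h2.2.trans two_div_pi_mem.2⟩
    have hm1 : rhoInv r1 ∈ Icc (π/2) π := image_rhoInv1 ▸ Set.mem_image_of_mem rhoInv h1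
    have hm2 : rhoInv r2 ∈ Icc (π/2) π := image_rhoInv1 ▸ Set.mem_image_of_mem rhoInv h2
    exact strictAntiOn_gProf hm2 hm1 (strictAntiOn_rhoInv h1' h2' hlt)
  · rw [himg, image_rhoInv1, image_g2]
  · intro r1 h1 r2 h2 hlt
    have h1' : r1 ∈ Icc (0:ℝ) 1 := ⟨le_trans two_div_pi_mem.1 h1.1, h1.2⟩
    have h2' : r2 ∈ Icc (0:ℝ) 1 := ⟨le_trans two_div_pi_mem.1 h2.1, h2.2⟩
    have hm1 : rhoInv r1 ∈ Icc 0 (π/2) := image_rhoInv2 ▸ Set.mem_image_of_mem rhoInv h1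
    have hm2 : rhoInv r2 ∈ Icc 0 (π/2) := image_rhoInv2 ▸ Set.mem_image_of_mem rhoInv h2
    exact strictMonoOn_gProf hm2 hm1 (strictAntiOn_rhoInv h1' h2' hlt)
  · rw [himg, image_rhoInv2, image_g1]
end
end

section
/- For any subset F of the Heisenberg group H^n, the t-convex hull t-co(F) = {p ∈ H^n : p ∈ L_{p₁,p₂} for some p₁, p₂ ∈ F with z_{p₁} = z_{p₂}} contains F and satisfies diam(t-co F) = diam F with respect to the Carnot-Carathéodory distance. -/
open scoped Real ENNReal
open MeasureTheory

noncomputable section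

/-- The Heisenberg group `ℍⁿ`, identified with `ℂⁿ × ℝ` (with the Euclidean `ℓ²` norm on
the `ℂⁿ` factor). -/
abbrev Heis (n : ℕ) : Type := EuclideanSpace ℂ (Fin n) × ℝ

/-- Borel σ-algebra on `ℂⁿ`. -/
instance (n : ℕ) : MeasurableSpace (EuclideanSpace ℂ (Fin n)) := borel _

instance (n : ℕ) : BorelSpace (EuclideanSpace ℂ (Fin n)) := ⟨rfl⟩

/-- Lebesgue measure on `ℂⁿ`. -/
instance (n : ℕ) : MeasureSpace (EuclideanSpace ℂ (Fin n)) :=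
  ⟨Measure.map ((WithLp.equiv 2 (Fin n → ℂ)).symm) volume⟩

namespace Heis

/-- The Hermitian product `z ⬝ conj w = ∑ zⱼ conj(wⱼ)`. -/
def herm {n : ℕ} (z w : EuclideanSpace ℂ (Fin n)) : ℂ :=
  ∑ j, z j * (starRingEnd ℂ) (w j)

/-- The Heisenberg group law `[z,t]·[z',t'] = [z+z', t+t'+2 Im (z ⬝ conj z')]`. -/
def mul {n : ℕ} (p q : Heis n) : Heis n :=
  (p.1 + q.1, p.2 + q.2 + 2 * (herm p.1 q.1).im)

/-- Dilations `δ_λ [z,t] = [λ z, λ² t]`. -/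
def dilation {n : ℕ} (l : ℝ) (p : Heis n) : Heis n := (l • p.1, l ^ 2 * p.2)

/-- A `C¹` horizontal curve in the Heisenberg group: at every point the tangent vector lies
in the horizontal subbundle spanned by the left-invariant fields
`X_j = ∂_{x_j} + 2 y_j ∂_t`, `Y_j = ∂_{y_j} - 2 x_j ∂_t`, which amounts to
`t'(s) = 2 Im (z(s) ⬝ conj z'(s))`. -/
structure HorizCurve (n : ℕ) where
  z : ℝ → EuclideanSpace ℂ (Fin n)
  t : ℝ → ℝ
  z' : ℝ → EuclideanSpace ℂ (Fin n)
  hz : ∀ s : ℝ, HasDerivAt z (z' s) s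
  ht : ∀ s : ℝ, HasDerivAt t (2 * (herm (z s) (z' s)).im) s
  hz' : Continuous z'

/-- The sub-Riemannian length of a horizontal curve (the metric `g` makes the horizontal
frame orthonormal, so the length is the integral of the Euclidean norm of `z'`). -/
def HorizCurve.length {n : ℕ} (γ : HorizCurve n) : ℝ :=
  ∫ s in (0:ℝ)..1, ‖γ.z' s‖

/-- The Carnot–Carathéodory distance: the infimum of lengths of horizontal curves
joining `p` to `q`. -/
def ccDist {n : ℕ} (p q : Heis n) : ℝ :=
  sInf { L : ℝ | ∃ γ : HorizCurve n, γ.z 0 = p.1 ∧ γ.t 0 = p.2 ∧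
      γ.z 1 = q.1 ∧ γ.t 1 = q.2 ∧ L = γ.length }

/-- Open CC-ball. -/
def ccBall {n : ℕ} (p : Heis n) (r : ℝ) : Set (Heis n) := { q | ccDist p q < r }

/-- Closed CC-ball. -/
def ccClosedBall {n : ℕ} (p : Heis n) (r : ℝ) : Set (Heis n) := { q | ccDist p q ≤ r }

/-- CC-diameter of a set. -/
def ccDiam {n : ℕ} (F : Set (Heis n)) : ℝ :=
  sSup { r : ℝ | ∃ p ∈ F, ∃ q ∈ F, r = ccDist p q }

/-- A set is CC-bounded if the pairwise CC-distances of its points are bounded. -/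
def ccBounded {n : ℕ} (F : Set (Heis n)) : Prop :=
  ∃ M : ℝ, ∀ p ∈ F, ∀ q ∈ F, ccDist p q ≤ M

/-- The vertical segment joining two points with the same `ℂⁿ`-component. -/
def vseg {n : ℕ} (p q : Heis n) : Set (Heis n) :=
  { x | x.1 = p.1 ∧ x.2 ∈ Set.uIcc p.2 q.2 }

/-- The `t`-convex hull of a set. -/
def tco {n : ℕ} (F : Set (Heis n)) : Set (Heis n) :=
  { x | ∃ p₁ ∈ F, ∃ p₂ ∈ F, p₁.1 = p₂.1 ∧ x ∈ vseg p₁ p₂ }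

/-- A set is `t`-convex if it contains the vertical segment joining any two of its points
having the same `ℂⁿ`-component. -/
def TConvex {n : ℕ} (E : Set (Heis n)) : Prop :=
  ∀ p ∈ E, ∀ q ∈ E, p.1 = q.1 → vseg p q ⊆ E

/-- The rotation `r_θ [z,t] = [(e^{iθ₁} z₁, …, e^{iθₙ} zₙ), t]`. -/
def rot {n : ℕ} (θ : Fin n → ℝ) (p : Heis n) : Heis n :=
  ((WithLp.equiv 2 (Fin n → ℂ)).symm fun j => Complex.exp ((θ j : ℂ) * Complex.I) * p.1 j,
    p.2)

/-- Rotationally invariant sets: the class `𝓡`. -/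
def RotInvariant {n : ℕ} (F : Set (Heis n)) : Prop :=
  ∀ θ : Fin n → ℝ, rot θ '' F ⊆ F

/-- The reflection `σ [z,t] = [conj z, t]`. -/
def sigmaRefl {n : ℕ} (p : Heis n) : Heis n :=
  ((WithLp.equiv 2 (Fin n → ℂ)).symm fun j => (starRingEnd ℂ) (p.1 j), p.2)

/-- The Steiner symmetrization of a set with respect to the `ℂⁿ`-plane. -/
def steiner {n : ℕ} (F : Set (Heis n)) : Set (Heis n) :=
  { x | x.1 ∈ Prod.fst '' F ∧
      2 * |x.2| ≤ (volume { s : ℝ | ((x.1, s) : Heis n) ∈ F }).toReal }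

/-- The isodiametric constant `C_I`. -/
def CI (n : ℕ) : ℝ :=
  sSup { x : ℝ | ∃ F : Set (Heis n), ccBounded F ∧ 0 < ccDiam F ∧
    x = (volume F).toReal / (ccDiam F) ^ (2 * n + 2) }

/-- The isodiametric constant `C_{I,𝓡}` for the restricted problem in the class `𝓡`. -/
def CIR (n : ℕ) : ℝ :=
  sSup { x : ℝ | ∃ F : Set (Heis n), RotInvariant F ∧ ccBounded F ∧ 0 < ccDiam F ∧
    x = (volume F).toReal / (ccDiam F) ^ (2 * n + 2) }

end Heis


namespace Heis

variable {n : ℕ}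

lemma herm_add_left (z w v : EuclideanSpace ℂ (Fin n)) :
    herm (z + w) v = herm z v + herm w v := by
  simp [herm, add_mul, Finset.sum_add_distrib]

lemma herm_add_right (z w v : EuclideanSpace ℂ (Fin n)) :
    herm z (w + v) = herm z w + herm z v := by
  simp [herm, mul_add, Finset.sum_add_distrib]

lemma herm_smul_left (a : ℝ) (z v : EuclideanSpace ℂ (Fin n)) :
    herm (a • z) v = a * herm z v := by
  simp [herm, Finset.mul_sum, Complex.real_smul, mul_assoc]

lemma herm_csmul_left (a : ℂ) (z v : EuclideanSpace ℂ (Fin n)) :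
    herm (a • z) v = a * herm z v := by
  simp [herm, Finset.mul_sum, mul_assoc]

lemma herm_csmul_right (a : ℂ) (z v : EuclideanSpace ℂ (Fin n)) :
    herm z (a • v) = (starRingEnd ℂ) a * herm z v := by
  simp [herm, Finset.mul_sum]; congr 1; ext j; ring

lemma herm_smul_right (a : ℝ) (z v : EuclideanSpace ℂ (Fin n)) :
    herm z (a • v) = a * herm z v := by
  have : (a : ℂ) • v = a • v := by simp [Complex.coe_smul]
  rw [← this, herm_csmul_right]; simp

lemma herm_neg_right (z v : EuclideanSpace ℂ (Fin n)) :
    herm z (-v) = - herm z v := by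
  have : (-v) = ((-1 : ℝ) • v) := by simp
  rw [this, herm_smul_right]; simp

lemma herm_self_im (z : EuclideanSpace ℂ (Fin n)) : (herm z z).im = 0 := by
  simp [herm, Complex.im_sum, Complex.mul_conj]

lemma continuous_herm₂ : Continuous fun x : EuclideanSpace ℂ (Fin n) × EuclideanSpace ℂ (Fin n) => herm x.1 x.2 := by
  unfold herm
  refine continuous_finset_sum _ fun j _ => ?_
  exact ((PiLp.continuous_apply 2 _ j).comp continuous_fst).mul
    (Complex.continuous_conj.comp ((PiLp.continuous_apply 2 _ j).comp continuous_snd))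

lemma continuous_herm_comp {f g : ℝ → EuclideanSpace ℂ (Fin n)} (hf : Continuous f)
    (hg : Continuous g) : Continuous fun s => herm (f s) (g s) :=
  continuous_herm₂.comp (hf.prodMk hg)

namespace HorizCurve

lemma cont_z (γ : HorizCurve n) : Continuous γ.z :=
  continuous_iff_continuousAt.2 fun s => (γ.hz s).continuousAt

lemma cont_integrand (γ : HorizCurve n) :
    Continuous fun s => 2 * (herm (γ.z s) (γ.z' s)).im :=
  (continuous_const.mul (Complex.continuous_im.comp (continuous_herm_comp γ.cont_z γ.hz')))

/-- FTC formula for the vertical component. -/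
lemma t_eq (γ : HorizCurve n) (b : ℝ) :
    γ.t b = γ.t 0 + ∫ s in (0:ℝ)..b, 2 * (herm (γ.z s) (γ.z' s)).im := by
  have := intervalIntegral.integral_eq_sub_of_hasDerivAt
    (f := γ.t) (f' := fun s => 2 * (herm (γ.z s) (γ.z' s)).im)
    (fun x _ => γ.ht x) (γ.cont_integrand.intervalIntegrable 0 b)
  rw [this]; ring

lemma length_nonneg (γ : HorizCurve n) : 0 ≤ γ.length :=
  intervalIntegral.integral_nonneg (by norm_num) fun s _ => norm_nonneg _

end HorizCurve

/-- The set of lengths of horizontal curves joining `p` to `q`. -/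
def lengthSet (p q : Heis n) : Set ℝ :=
  { L : ℝ | ∃ γ : HorizCurve n, γ.z 0 = p.1 ∧ γ.t 0 = p.2 ∧
      γ.z 1 = q.1 ∧ γ.t 1 = q.2 ∧ L = γ.length }

lemma ccDist_eq (p q : Heis n) : ccDist p q = sInf (lengthSet p q) := rfl

lemma lengthSet_nonneg {p q : Heis n} : ∀ L ∈ lengthSet p q, (0:ℝ) ≤ L := by
  rintro L ⟨γ, -, -, -, -, rfl⟩; exact γ.length_nonneg

lemma lengthSet_bddBelow (p q : Heis n) : BddBelow (lengthSet p q) :=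
  ⟨0, fun L hL => lengthSet_nonneg L hL⟩

lemma ccDist_nonneg (p q : Heis n) : 0 ≤ ccDist p q :=
  Real.sInf_nonneg lengthSet_nonneg

lemma ccDist_le_length {p q : Heis n} {γ : HorizCurve n} (h0 : γ.z 0 = p.1)
    (h0' : γ.t 0 = p.2) (h1 : γ.z 1 = q.1) (h1' : γ.t 1 = q.2) :
    ccDist p q ≤ γ.length :=
  csInf_le (lengthSet_bddBelow p q) ⟨γ, h0, h0', h1, h1', rfl⟩

/-- Building a horizontal curve from `C¹` horizontal data. -/
def mk' (z z' : ℝ → EuclideanSpace ℂ (Fin n)) (hz : ∀ s, HasDerivAt z (z' s) s)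
    (hz' : Continuous z') (t₀ : ℝ) : HorizCurve n where
  z := z
  t := fun s => t₀ + ∫ u in (0:ℝ)..s, 2 * (herm (z u) (z' u)).im
  z' := z'
  hz := hz
  ht := by
    intro s
    have hc : Continuous fun u => 2 * (herm (z u) (z' u)).im :=
      continuous_const.mul (Complex.continuous_im.comp
        (continuous_herm_comp (continuous_iff_continuousAt.2 fun u => (hz u).continuousAt) hz'))
    have := (intervalIntegral.integral_hasDerivAt_right
      (hc.intervalIntegrable 0 s) (hc.stronglyMeasurableAtFilter _ _) hc.continuousAt)
    simpa using this.const_add t₀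
  hz' := hz'

@[simp] lemma mk'_z (z z' hz hz' t₀) : (mk' (n := n) z z' hz hz' t₀).z = z := rfl
@[simp] lemma mk'_z' (z z' hz hz' t₀) : (mk' (n := n) z z' hz hz' t₀).z' = z' := rfl
lemma mk'_t (z z' hz hz' t₀) (s : ℝ) : (mk' (n := n) z z' hz hz' t₀).t s
    = t₀ + ∫ u in (0:ℝ)..s, 2 * (herm (z u) (z' u)).im := rfl
@[simp] lemma mk'_t0 (z z' hz hz' t₀) : (mk' (n := n) z z' hz hz' t₀).t 0 = t₀ := by
  simp [mk'_t]

/-- time reversal of a horizontal curve -/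
def HorizCurve.reverse (γ : HorizCurve n) : HorizCurve n where
  z := fun s => γ.z (1 - s)
  t := fun s => γ.t (1 - s)
  z' := fun s => (-1 : ℝ) • γ.z' (1 - s)
  hz := by
    intro s
    have h1 : HasDerivAt (fun s : ℝ => 1 - s) (-1) s := by
      simpa using (hasDerivAt_id s).const_sub 1
    exact (γ.hz (1 - s)).scomp s h1
  ht := by
    intro s
    have h1 : HasDerivAt (fun s : ℝ => 1 - s) (-1) s := by
      simpa using (hasDerivAt_id s).const_sub 1
    have := ((γ.ht (1 - s)).scomp s h1 : HasDerivAt (fun s => γ.t (1-s)) _ s)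
    convert this using 1 <;> try rfl
    rw [herm_smul_right]
    simp
  hz' := by have := γ.hz'; fun_prop

@[simp] lemma HorizCurve.reverse_z (γ : HorizCurve n) (s : ℝ) : γ.reverse.z s = γ.z (1-s) := rfl
@[simp] lemma HorizCurve.reverse_t (γ : HorizCurve n) (s : ℝ) : γ.reverse.t s = γ.t (1-s) := rfl

lemma HorizCurve.reverse_length (γ : HorizCurve n) : γ.reverse.length = γ.length := by
  unfold HorizCurve.length
  have : ∀ s : ℝ, ‖γ.reverse.z' s‖ = ‖γ.z' (1 - s)‖ := by
    intro s; show ‖(-1:ℝ) • γ.z' (1-s)‖ = _; rw [norm_smul]; simp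
  rw [intervalIntegral.integral_congr (fun s _ => this s)]
  have := intervalIntegral.integral_comp_sub_left (a := (0:ℝ)) (b := 1)
    (fun s => ‖γ.z' s‖) 1
  rw [this]; norm_num

open Real in
lemma deriv_smoothTransition_of_neg {x : ℝ} (hx : x < 0) :
    deriv Real.smoothTransition x = 0 := by
  have h : Real.smoothTransition =ᶠ[nhds x] fun _ => (0:ℝ) := by
    filter_upwards [Iio_mem_nhds hx] with y hy
    exact Real.smoothTransition.zero_of_nonpos (le_of_lt hy)
  rw [h.deriv_eq, deriv_const]

open Real in
lemma deriv_smoothTransition_of_gt {x : ℝ} (hx : 1 < x) :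
    deriv Real.smoothTransition x = 0 := by
  have h : Real.smoothTransition =ᶠ[nhds x] fun _ => (1:ℝ) := by
    filter_upwards [Ioi_mem_nhds hx] with y hy
    exact Real.smoothTransition.one_of_one_le (le_of_lt hy)
  rw [h.deriv_eq, deriv_const]

lemma hasDerivAt_smoothTransition (x : ℝ) :
    HasDerivAt Real.smoothTransition (deriv Real.smoothTransition x) x :=
  ((Real.smoothTransition.contDiff (n := 1)).differentiable (by norm_num) x).hasDerivAt

lemma continuous_deriv_smoothTransition :
    Continuous (deriv Real.smoothTransition) :=
  (Real.smoothTransition.contDiff (n := 1)).continuous_deriv le_rfl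

lemma hasDerivAt_complex_im {f : ℝ → ℂ} {f' : ℂ} {x : ℝ} (h : HasDerivAt f f' x) :
    HasDerivAt (fun s => (f s).im) f'.im x :=
  (Complex.imCLM.hasFDerivAt.comp_hasDerivAt x h : )

lemma herm_single_right (x : EuclideanSpace ℂ (Fin n)) (j : Fin n) :
    herm x (EuclideanSpace.single j (1:ℂ)) = x j := by
  simp [herm, EuclideanSpace.single_apply]

lemma herm_single_left (x : EuclideanSpace ℂ (Fin n)) (j : Fin n) :
    herm (EuclideanSpace.single j (1:ℂ)) x = (starRingEnd ℂ) (x j) := by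
  simp [herm, EuclideanSpace.single_apply]

lemma herm_single_single (j : Fin n) :
    herm (EuclideanSpace.single j (1:ℂ)) (EuclideanSpace.single j (1:ℂ)) = 1 := by
  rw [herm_single_right]; simp

set_option maxHeartbeats 2000000 in
/-- Connectivity: any two points are joined by a horizontal curve. -/
theorem exists_curve (hn : 0 < n) (p q : Heis n) :
    ∃ γ : HorizCurve n, γ.z 0 = p.1 ∧ γ.t 0 = p.2 ∧ γ.z 1 = q.1 ∧ γ.t 1 = q.2 := by
  classical
  set ψ := Real.smoothTransition with hψ
  set j : Fin n := ⟨0, hn⟩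
  set E : EuclideanSpace ℂ (Fin n) := EuclideanSpace.single j (1:ℂ) with hE
  set a : EuclideanSpace ℂ (Fin n) := q.1 - p.1 with ha
  set τ : ℝ := q.2 - p.2 - 2 * (herm p.1 a).im with hτ
  set θ : ℝ := if 0 ≤ τ then -(2*π) else 2*π with hθ
  set ρ : ℝ := Real.sqrt (|τ| / (4*π)) with hρ
  -- basic trig facts about θ
  have hcosθ : Real.cos θ = 1 := by
    rw [hθ]; split <;> simp [Real.cos_two_pi]
  have hsinθ : Real.sin θ = 0 := by
    rw [hθ]; split <;> simp [Real.sin_two_pi]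
  have hρsq : ρ^2 = |τ| / (4*π) := Real.sq_sqrt (by positivity)
  have hρθ : -(2 * ρ^2 * θ) = τ := by
    rw [hρsq, hθ]
    split_ifs with h
    · rw [abs_of_nonneg h]; field_simp; ring
    · rw [abs_of_neg (not_le.1 h)]; field_simp; ring
  -- the transition functions
  set f : ℝ → ℝ := fun s => ψ (4*s - 1/2) with hf
  set f' : ℝ → ℝ := fun s => 4 * deriv ψ (4*s - 1/2) with hf'
  set h : ℝ → ℝ := fun s => ψ (4*s - 5/2) with hh
  set h' : ℝ → ℝ := fun s => 4 * deriv ψ (4*s - 5/2) with hh'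
  have hdf : ∀ s, HasDerivAt f (f' s) s := by
    intro s
    have hlin : HasDerivAt (fun s : ℝ => 4*s - 1/2) 4 s := by
      simpa using ((hasDerivAt_id s).const_mul 4).sub_const (1/2)
    have h2 := (hasDerivAt_smoothTransition (4*s - 1/2)).comp s hlin
    rw [show f' s = deriv ψ (4*s - 1/2) * 4 by rw [hf']; ring]
    exact h2
  have hdh : ∀ s, HasDerivAt h (h' s) s := by
    intro s
    have hlin : HasDerivAt (fun s : ℝ => 4*s - 5/2) 4 s := by
      simpa using ((hasDerivAt_id s).const_mul 4).sub_const (5/2)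
    have h2 := (hasDerivAt_smoothTransition (4*s - 5/2)).comp s hlin
    rw [show h' s = deriv ψ (4*s - 5/2) * 4 by rw [hh']; ring]
    exact h2
  set φ : ℝ → ℝ := fun s => θ * h s with hφ
  set φ' : ℝ → ℝ := fun s => θ * h' s with hφ'
  have hdφ : ∀ s, HasDerivAt φ (φ' s) s := fun s => (hdh s).const_mul θ
  -- the loop
  set c : ℝ → ℂ := fun s => (ρ:ℂ) * ((Real.cos (φ s) : ℂ) - 1 + (Real.sin (φ s) : ℂ) * Complex.I) with hc
  set c' : ℝ → ℂ := fun s => (ρ:ℂ) * (φ' s : ℂ) * (-(Real.sin (φ s) : ℂ) + (Real.cos (φ s) : ℂ) * Complex.I) with hc'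
  have hdc : ∀ s, HasDerivAt c (c' s) s := by
    intro s
    have hcos : HasDerivAt (fun s => (Real.cos (φ s) : ℂ)) ((-Real.sin (φ s) * φ' s : ℝ) : ℂ) s :=
      (((Real.hasDerivAt_cos (φ s)).comp s (hdφ s))).ofReal_comp
    have hsin : HasDerivAt (fun s => (Real.sin (φ s) : ℂ)) ((Real.cos (φ s) * φ' s : ℝ) : ℂ) s :=
      (((Real.hasDerivAt_sin (φ s)).comp s (hdφ s))).ofReal_comp
    have := (((hcos.sub_const 1).add (hsin.mul_const Complex.I)).const_mul (ρ:ℂ))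
    convert this using 1 <;> try rfl
    simp only [Complex.ofReal_mul, Complex.ofReal_neg]
    ring
  have hlin1 : Continuous fun s : ℝ => 4*s - 1/2 :=
    (continuous_const.mul continuous_id).sub continuous_const
  have hlin2 : Continuous fun s : ℝ => 4*s - 5/2 :=
    (continuous_const.mul continuous_id).sub continuous_const
  have hφc : Continuous φ :=
    continuous_const.mul (Real.smoothTransition.continuous.comp hlin2)
  have hφ'c : Continuous φ' :=
    continuous_const.mul (continuous_const.mul
      (continuous_deriv_smoothTransition.comp hlin2))
  have hf'c : Continuous f' :=
    continuous_const.mul (continuous_deriv_smoothTransition.comp hlin1)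
  have hcont_c' : Continuous c' := by
    refine (continuous_const.mul (Complex.continuous_ofReal.comp hφ'c)).mul ?_
    exact ((Complex.continuous_ofReal.comp (Real.continuous_sin.comp hφc)).neg).add
      ((Complex.continuous_ofReal.comp (Real.continuous_cos.comp hφc)).mul continuous_const)
  -- the z-curve
  set Z : ℝ → EuclideanSpace ℂ (Fin n) := fun s => p.1 + f s • a + c s • E with hZdef
  set Z' : ℝ → EuclideanSpace ℂ (Fin n) := fun s => f' s • a + c' s • E with hZ'def
  have hdZ : ∀ s, HasDerivAt Z (Z' s) s := by
    intro s
    have := ((hasDerivAt_const s p.1).add ((hdf s).smul_const a)).add ((hdc s).smul_const E)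
    convert this using 1 <;> try rfl
    simp [hZ'def]
  have hcZ' : Continuous Z' :=
    (hf'c.smul continuous_const).add (hcont_c'.smul continuous_const)
  -- endpoint values
  have hf0 : f 0 = 0 := Real.smoothTransition.zero_of_nonpos (by norm_num)
  have hf1 : f 1 = 1 := Real.smoothTransition.one_of_one_le (by norm_num)
  have hh0 : h 0 = 0 := Real.smoothTransition.zero_of_nonpos (by norm_num)
  have hh1 : h 1 = 1 := Real.smoothTransition.one_of_one_le (by norm_num)
  have hφ0 : φ 0 = 0 := by rw [hφ]; simp [hh0]
  have hφ1 : φ 1 = θ := by rw [hφ]; simp [hh1]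
  have hc0 : c 0 = 0 := by rw [hc]; simp [hφ0]
  have hc1 : c 1 = 0 := by rw [hc]; simp [hφ1, hcosθ, hsinθ]
  have hZ0 : Z 0 = p.1 := by rw [hZdef]; simp [hf0, hc0]
  have hZ1 : Z 1 = q.1 := by rw [hZdef]; simp [hf1, hc1, ha]
  -- support facts
  have hS1 : ∀ s, (f s : ℂ) * (starRingEnd ℂ) (c' s) = (starRingEnd ℂ) (c' s) := by
    intro s
    rcases le_or_gt (3/8 : ℝ) s with hs | hs
    · have : f s = 1 := Real.smoothTransition.one_of_one_le (by rw [hf] at *; linarith)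
      rw [this]; push_cast; rw [one_mul]
    · have hd : deriv ψ (4*s - 5/2) = 0 := deriv_smoothTransition_of_neg (by linarith)
      have : c' s = 0 := by rw [hc']; simp [hφ', hh', hd]
      simp [this]
  have hS2 : ∀ s, c s * ((f' s : ℝ) : ℂ) = 0 := by
    intro s
    rcases le_or_gt s (5/8 : ℝ) with hs | hs
    · have hhs : h s = 0 := Real.smoothTransition.zero_of_nonpos (by rw [hh] at *; linarith)
      have : c s = 0 := by rw [hc]; simp [hφ, hhs]
      rw [this, zero_mul]
    · have hd : deriv ψ (4*s - 1/2) = 0 := deriv_smoothTransition_of_gt (by linarith)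
      have hf's : f' s = 0 := by
        have h4 : f' s = 4 * deriv ψ (4*s - 1/2) := by rw [hf']
        rw [h4, hd, mul_zero]
      rw [hf's]; simp
  -- the expansion of the horizontality integrand
  set H₀ : ℂ := herm p.1 a with hH₀
  set K : ℂ := p.1 j + a j with hK
  have hherm : ∀ s, herm (Z s) (Z' s)
      = (f' s : ℂ) * H₀ + (starRingEnd ℂ) (c' s) * K
        + ((f s : ℂ) * (f' s : ℂ)) * herm a a + c s * (starRingEnd ℂ) (c' s) := by
    intro s
    have hermE1 : ∀ x : EuclideanSpace ℂ (Fin n), herm x E = x j := fun x => by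
      rw [hE, herm_single_right]
    have hermE2 : ∀ x : EuclideanSpace ℂ (Fin n), herm E x = (starRingEnd ℂ) (x j) :=
      fun x => by rw [hE, herm_single_left]
    have hermEE : herm E E = 1 := by rw [hE, herm_single_single]
    rw [hZdef, hZ'def]
    simp only [herm_add_left, herm_add_right, herm_smul_left, herm_smul_right,
      herm_csmul_left, herm_csmul_right, hermE1, hermE2, hermEE, mul_one, hH₀, hK,
      hE, PiLp.add_apply, PiLp.smul_apply, EuclideanSpace.single_apply, smul_eq_mul,
      Complex.real_smul, if_pos rfl, herm_single_left, herm_single_right, herm_single_single]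
    push_cast
    linear_combination ((starRingEnd ℂ) (a j)) * hS2 s + (a j) * hS1 s
  have him_flip : ∀ z w : ℂ, ((starRingEnd ℂ) z * w).im = -((z * (starRingEnd ℂ) w).im) := by
    intro z w
    have : (starRingEnd ℂ) z * w = (starRingEnd ℂ) (z * (starRingEnd ℂ) w) := by
      rw [map_mul]; simp
    rw [this, Complex.conj_im]
  have hg : ∀ s, 2 * (herm (Z s) (Z' s)).im
      = 2 * H₀.im * f' s + (-2) * ((c' s) * (starRingEnd ℂ) K).im
        + (2*ρ^2 * (Real.cos (φ s) * φ' s) - 2*ρ^2 * φ' s) := by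
    intro s
    rw [hherm s]
    have h1 : ((f' s : ℂ) * H₀).im = f' s * H₀.im := by
      simp [Complex.mul_im]
    have h2 : (((f s : ℂ) * (f' s : ℂ)) * herm a a).im = 0 := by
      simp [Complex.mul_im, Complex.mul_re, herm_self_im]
    have h3 : (c s * (starRingEnd ℂ) (c' s)).im = ρ^2 * (φ' s * Real.cos (φ s) - φ' s) := by
      rw [hc, hc']
      simp only [map_mul, map_add, map_sub, map_neg, map_one, Complex.conj_ofReal,
        Complex.conj_I]
      simp only [Complex.mul_im, Complex.mul_re, Complex.add_re, Complex.add_im,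
        Complex.sub_re, Complex.sub_im, Complex.neg_re, Complex.neg_im,
        Complex.ofReal_re, Complex.ofReal_im, Complex.I_re, Complex.I_im,
        Complex.one_re, Complex.one_im]
      linear_combination (-(ρ^2 * (φ' s))) * Real.sin_sq_add_cos_sq (φ s)
    rw [Complex.add_im, Complex.add_im, Complex.add_im, h1, h2, h3, him_flip]
    ring
  -- antiderivative
  set G : ℝ → ℝ := fun s => 2 * H₀.im * f s + (-2) * ((c s) * (starRingEnd ℂ) K).im
    + (2*ρ^2 * Real.sin (φ s) - 2*ρ^2 * φ s) with hG
  have hdG : ∀ s, HasDerivAt G (2 * (herm (Z s) (Z' s)).im) s := by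
    intro s
    rw [hg s]
    have t1 : HasDerivAt (fun s => 2 * H₀.im * f s) (2 * H₀.im * f' s) s :=
      (hdf s).const_mul _
    have t2 : HasDerivAt (fun s => (-2 : ℝ) * ((c s) * (starRingEnd ℂ) K).im)
        ((-2 : ℝ) * ((c' s) * (starRingEnd ℂ) K).im) s :=
      (hasDerivAt_complex_im ((hdc s).mul_const _)).const_mul _
    have t3 : HasDerivAt (fun s => 2*ρ^2 * Real.sin (φ s) - 2*ρ^2 * φ s)
        (2*ρ^2 * (Real.cos (φ s) * φ' s) - 2*ρ^2 * φ' s) s := by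
      have := ((Real.hasDerivAt_sin (φ s)).comp s (hdφ s)).const_mul (2*ρ^2)
      exact this.sub ((hdφ s).const_mul _)
    exact (t1.add t2).add t3
  have hcint : Continuous fun s => 2 * (herm (Z s) (Z' s)).im := by
    have hcZ : Continuous Z := continuous_iff_continuousAt.2 fun s => (hdZ s).continuousAt
    exact continuous_const.mul (Complex.continuous_im.comp (continuous_herm_comp hcZ hcZ'))
  have hint : (∫ s in (0:ℝ)..1, 2 * (herm (Z s) (Z' s)).im) = G 1 - G 0 :=
    intervalIntegral.integral_eq_sub_of_hasDerivAt (fun s _ => hdG s)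
      (hcint.intervalIntegrable 0 1)
  have hG0 : G 0 = 0 := by
    rw [hG]; simp [hf0, hc0, hφ0]
  have hG1 : G 1 = 2 * H₀.im + -(2*ρ^2*θ) := by
    rw [hG]; simp [hf1, hc1, hφ1, hsinθ]
  refine ⟨mk' Z Z' hdZ hcZ' p.2, ?_, ?_, ?_, ?_⟩
  · rw [mk'_z]; exact hZ0
  · rw [mk'_t]; simp
  · rw [mk'_z]; exact hZ1
  · rw [mk'_t, hint, hG1, hG0]
    rw [hτ] at hρθ
    linarith [hρθ]

set_option maxHeartbeats 1000000 in
/-- Key inequality: for `q` on the vertical segment over `p₁, p₂` (which share the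
`ℂⁿ`-component), `d(p,q) ≤ max (d(p,p₁)) (d(p,p₂))`. -/
theorem ccDist_le_max_aux (hn : 0 < n) (p p₁ p₂ q : Heis n) (h12 : p₁.1 = p₂.1)
    (hq1 : q.1 = p₁.1) (hq2 : q.2 ∈ Set.uIcc p₁.2 p₂.2) :
    ccDist p q ≤ max (ccDist p p₁) (ccDist p p₂) := by
  refine le_of_forall_pos_le_add fun ε hε => ?_
  have hne1 : (lengthSet p p₁).Nonempty := by
    obtain ⟨γ, h1, h2, h3, h4⟩ := exists_curve hn p p₁
    exact ⟨γ.length, γ, h1, h2, h3, h4, rfl⟩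
  have hne2 : (lengthSet p p₂).Nonempty := by
    obtain ⟨γ, h1, h2, h3, h4⟩ := exists_curve hn p p₂
    exact ⟨γ.length, γ, h1, h2, h3, h4, rfl⟩
  obtain ⟨L₁, hL₁mem, hL₁⟩ := Real.lt_sInf_add_pos hne1 hε
  obtain ⟨L₂, hL₂mem, hL₂⟩ := Real.lt_sInf_add_pos hne2 hε
  obtain ⟨γ₁, e10, e11, e12, e13, rfl⟩ := hL₁mem
  obtain ⟨γ₂, e20, e21, e22, e23, rfl⟩ := hL₂mem
  rw [← ccDist_eq] at hL₁ hL₂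
  -- the interpolated family
  set Z : ℝ → ℝ → EuclideanSpace ℂ (Fin n) :=
    fun l s => (1 - l) • γ₁.z s + l • γ₂.z s with hZ
  set Z' : ℝ → ℝ → EuclideanSpace ℂ (Fin n) :=
    fun l s => (1 - l) • γ₁.z' s + l • γ₂.z' s with hZ'
  have hdZ : ∀ l s, HasDerivAt (Z l) (Z' l s) s := fun l s =>
    ((γ₁.hz s).const_smul (1 - l)).add ((γ₂.hz s).const_smul l)
  have hcZ' : ∀ l, Continuous (Z' l) := fun l =>
    by have h1 := γ₁.hz'; have h2 := γ₂.hz'; simp only [hZ']; fun_prop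
  set T : ℝ → ℝ := fun l => p.2 + ∫ s in (0:ℝ)..1, 2 * (herm (Z l s) (Z' l s)).im with hT
  have hTcont : Continuous T := by
    refine continuous_const.add ?_
    refine intervalIntegral.continuous_parametric_intervalIntegral_of_continuous'
      (f := fun l s => 2 * (herm (Z l s) (Z' l s)).im) ?_ 0 1
    have hZc : Continuous fun x : ℝ × ℝ => Z x.1 x.2 :=
      ((continuous_const.sub continuous_fst).smul (γ₁.cont_z.comp continuous_snd)).add
        (continuous_fst.smul (γ₂.cont_z.comp continuous_snd))
    have hZ'c : Continuous fun x : ℝ × ℝ => Z' x.1 x.2 :=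
      ((continuous_const.sub continuous_fst).smul (γ₁.hz'.comp continuous_snd)).add
        (continuous_fst.smul (γ₂.hz'.comp continuous_snd))
    exact continuous_const.mul
      (Complex.continuous_im.comp (continuous_herm₂.comp (hZc.prodMk hZ'c)))
  have hT0 : T 0 = p₁.2 := by
    have h0 : ∀ s ∈ Set.uIcc (0:ℝ) 1, 2 * (herm (Z 0 s) (Z' 0 s)).im
        = 2 * (herm (γ₁.z s) (γ₁.z' s)).im := by
      intro s _; rw [hZ, hZ']; norm_num
    rw [hT]
    simp only []
    rw [intervalIntegral.integral_congr h0, ← e11, ← γ₁.t_eq 1, e13]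
  have hT1 : T 1 = p₂.2 := by
    have h0 : ∀ s ∈ Set.uIcc (0:ℝ) 1, 2 * (herm (Z 1 s) (Z' 1 s)).im
        = 2 * (herm (γ₂.z s) (γ₂.z' s)).im := by
      intro s _; rw [hZ, hZ']; norm_num
    rw [hT]
    simp only []
    rw [intervalIntegral.integral_congr h0, ← e21, ← γ₂.t_eq 1, e23]
  have hqT : q.2 ∈ Set.uIcc (T 0) (T 1) := by rw [hT0, hT1]; exact hq2
  obtain ⟨l, hl, hTl⟩ := intermediate_value_uIcc hTcont.continuousOn hqT
  rw [Set.uIcc_of_le (zero_le_one' ℝ)] at hl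
  -- the interpolated curve
  set γ : HorizCurve n := mk' (Z l) (Z' l) (hdZ l) (hcZ' l) p.2 with hγ
  have hz0 : γ.z 0 = p.1 := by
    rw [hγ, mk'_z, hZ]
    simp only []
    rw [e10, e20, ← add_smul]
    norm_num
  have hz1 : γ.z 1 = q.1 := by
    rw [hγ, mk'_z, hZ]
    simp only []
    rw [e12, e22, ← h12, ← add_smul, hq1]
    norm_num
  have ht0 : γ.t 0 = p.2 := by
    rw [hγ, mk'_t]
    simp
  have ht1 : γ.t 1 = q.2 := by
    rw [hγ, mk'_t]
    exact hTl
  have hlen : γ.length ≤ (1 - l) * γ₁.length + l * γ₂.length := by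
    have hγlen : γ.length = ∫ s in (0:ℝ)..1, ‖Z' l s‖ := by
      rw [HorizCurve.length, hγ, mk'_z']
    rw [hγlen, HorizCurve.length, HorizCurve.length]
    have hle : ∀ s ∈ Set.Icc (0:ℝ) 1, ‖Z' l s‖ ≤ (1-l) * ‖γ₁.z' s‖ + l * ‖γ₂.z' s‖ := by
      intro s _
      rw [hZ']
      refine le_trans (norm_add_le _ _) ?_
      rw [norm_smul, norm_smul, Real.norm_eq_abs, Real.norm_eq_abs,
        abs_of_nonneg (by linarith [hl.2]), abs_of_nonneg hl.1]
    have hint1 : IntervalIntegrable (fun s => ‖Z' l s‖) MeasureTheory.volume 0 1 :=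
      ((hcZ' l).norm).intervalIntegrable 0 1
    have hint2 : IntervalIntegrable (fun s => (1-l) * ‖γ₁.z' s‖ + l * ‖γ₂.z' s‖)
        MeasureTheory.volume 0 1 :=
      ((continuous_const.mul γ₁.hz'.norm).add (continuous_const.mul γ₂.hz'.norm)).intervalIntegrable 0 1
    refine le_trans (intervalIntegral.integral_mono_on (by norm_num) hint1 hint2 hle) ?_
    rw [intervalIntegral.integral_add (f := fun s => (1-l) * ‖γ₁.z' s‖) (g := fun s => l * ‖γ₂.z' s‖)
      ((continuous_const.mul γ₁.hz'.norm).intervalIntegrable 0 1)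
      ((continuous_const.mul γ₂.hz'.norm).intervalIntegrable 0 1),
      intervalIntegral.integral_const_mul, intervalIntegral.integral_const_mul]
  have hmax : γ.length ≤ max γ₁.length γ₂.length := by
    refine le_trans hlen ?_
    have m1 := le_max_left γ₁.length γ₂.length
    have m2 := le_max_right γ₁.length γ₂.length
    nlinarith [hl.1, hl.2]
  refine le_trans (ccDist_le_length hz0 ht0 hz1 ht1) (le_trans hmax ?_)
  rw [← max_add_add_right]
  exact max_le_max hL₁.le hL₂.le

lemma lengthSet_symm (p q : Heis n) : lengthSet p q = lengthSet q p := by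
  have key : ∀ a b : Heis n, lengthSet a b ⊆ lengthSet b a := by
    rintro a b L ⟨γ, z0, t0, z1, t1, rfl⟩
    refine ⟨γ.reverse, ?_, ?_, ?_, ?_, γ.reverse_length.symm⟩
    · rw [HorizCurve.reverse_z]; norm_num [z1]
    · rw [HorizCurve.reverse_t]; norm_num [t1]
    · rw [HorizCurve.reverse_z]; norm_num [z0]
    · rw [HorizCurve.reverse_t]; norm_num [t0]
  exact le_antisymm (key p q) (key q p)

lemma ccDist_symm (p q : Heis n) : ccDist p q = ccDist q p := by
  rw [ccDist_eq, ccDist_eq, lengthSet_symm]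

lemma ccDist_le_max (p p₁ p₂ q : Heis n) (h12 : p₁.1 = p₂.1)
    (hq1 : q.1 = p₁.1) (hq2 : q.2 ∈ Set.uIcc p₁.2 p₂.2) :
    ccDist p q ≤ max (ccDist p p₁) (ccDist p p₂) := by
  rcases Nat.eq_zero_or_pos n with hn0 | hn
  · subst hn0
    have hmax0 : 0 ≤ max (ccDist p p₁) (ccDist p p₂) :=
      le_max_of_le_left (ccDist_nonneg _ _)
    refine le_trans ?_ hmax0
    rcases Set.eq_empty_or_nonempty (lengthSet p q) with he | ⟨L, hL⟩
    · rw [ccDist_eq, he, Real.sInf_empty]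
    · obtain ⟨γ, z0, t0, z1, t1, rfl⟩ := hL
      have hint0 : ∀ (δ : HorizCurve 0), ∀ b : ℝ,
          (∫ s in (0:ℝ)..b, 2 * (herm (δ.z s) (δ.z' s)).im) = 0 := by
        intro δ b
        have h : ∀ s ∈ Set.uIcc (0:ℝ) b, 2 * (herm (δ.z s) (δ.z' s)).im = 0 := by
          intro s _; rw [herm]; simp
        rw [intervalIntegral.integral_congr h, intervalIntegral.integral_zero]
      have hq2' : q.2 = p.2 := by
        have h := γ.t_eq 1
        rw [hint0 γ 1, t1, t0] at h; simpa using h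
      set δ : HorizCurve 0 := mk' (fun _ => p.1) (fun _ => (0 : EuclideanSpace ℂ (Fin 0)))
        (fun s => hasDerivAt_const s p.1) continuous_const p.2 with hδ
      have hint0' : ∀ b : ℝ,
          (∫ u in (0:ℝ)..b, 2 * (herm ((fun _ => p.1) u) ((fun _ => (0 : EuclideanSpace ℂ (Fin 0))) u)).im) = 0 := by
        intro b
        have h : ∀ s ∈ Set.uIcc (0:ℝ) b,
            2 * (herm ((fun _ => p.1) s) ((fun _ => (0 : EuclideanSpace ℂ (Fin 0))) s)).im = 0 := by
          intro s _; rw [herm]; simp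
        rw [intervalIntegral.integral_congr h, intervalIntegral.integral_zero]
      have hle : ccDist p q ≤ δ.length := by
        refine ccDist_le_length ?_ ?_ ?_ ?_
        · rw [hδ, mk'_z]
        · rw [hδ, mk'_t, hint0']; ring
        · rw [hδ, mk'_z]; exact Subsingleton.elim _ _
        · rw [hδ, mk'_t, hint0', hq2']; ring
      refine le_trans hle ?_
      rw [HorizCurve.length, hδ, mk'_z']
      simp
  · exact ccDist_le_max_aux hn p p₁ p₂ q h12 hq1 hq2


end Heis

open Heis

/-- The `t`-convex hull of a set contains it and has the same CC-diameter. -/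
theorem stmt10 (n : ℕ) (F : Set (Heis n)) :
    F ⊆ Heis.tco F ∧ Heis.ccDiam (Heis.tco F) = Heis.ccDiam F := by
  have hFsub : F ⊆ tco F := fun p hp => ⟨p, hp, p, hp, rfl, rfl, Set.left_mem_uIcc⟩
  refine ⟨hFsub, ?_⟩
  set S : Set (Heis n) → Set ℝ :=
    fun X => {r | ∃ p ∈ X, ∃ q ∈ X, r = ccDist p q} with hS
  show sSup (S (tco F)) = sSup (S F)
  have hsub : S F ⊆ S (tco F) := by
    rintro r ⟨p, hp, q, hq, rfl⟩
    exact ⟨p, hFsub hp, q, hFsub hq, rfl⟩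
  have hkey : ∀ r ∈ S (tco F), ∃ r' ∈ S F, r ≤ r' := by
    rintro r ⟨p, hp, q, hq, rfl⟩
    obtain ⟨p₁, hp₁, p₂, hp₂, h12, hpseg⟩ := hp
    obtain ⟨q₁, hq₁, q₂, hq₂, g12, hqseg⟩ := hq
    have step1 : ccDist p q ≤ max (ccDist p q₁) (ccDist p q₂) :=
      ccDist_le_max p q₁ q₂ q g12 hqseg.1 hqseg.2
    have step2 : ccDist p q₁ ≤ max (ccDist p₁ q₁) (ccDist p₂ q₁) := by
      rw [ccDist_symm p q₁]
      refine le_trans (ccDist_le_max q₁ p₁ p₂ p h12 hpseg.1 hpseg.2) ?_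
      rw [ccDist_symm q₁ p₁, ccDist_symm q₁ p₂]
    have step3 : ccDist p q₂ ≤ max (ccDist p₁ q₂) (ccDist p₂ q₂) := by
      rw [ccDist_symm p q₂]
      refine le_trans (ccDist_le_max q₂ p₁ p₂ p h12 hpseg.1 hpseg.2) ?_
      rw [ccDist_symm q₂ p₁, ccDist_symm q₂ p₂]
    have hchain : ccDist p q ≤ max (max (ccDist p₁ q₁) (ccDist p₂ q₁))
        (max (ccDist p₁ q₂) (ccDist p₂ q₂)) :=
      le_trans step1 (max_le_max step2 step3)
    rcases max_choice (max (ccDist p₁ q₁) (ccDist p₂ q₁))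
        (max (ccDist p₁ q₂) (ccDist p₂ q₂)) with h | h <;> rw [h] at hchain
    · rcases max_choice (ccDist p₁ q₁) (ccDist p₂ q₁) with h2 | h2 <;> rw [h2] at hchain
      · exact ⟨_, ⟨p₁, hp₁, q₁, hq₁, rfl⟩, hchain⟩
      · exact ⟨_, ⟨p₂, hp₂, q₁, hq₁, rfl⟩, hchain⟩
    · rcases max_choice (ccDist p₁ q₂) (ccDist p₂ q₂) with h2 | h2 <;> rw [h2] at hchain
      · exact ⟨_, ⟨p₁, hp₁, q₂, hq₂, rfl⟩, hchain⟩
      · exact ⟨_, ⟨p₂, hp₂, q₂, hq₂, rfl⟩, hchain⟩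
  rcases Set.eq_empty_or_nonempty (S F) with he | hne
  · have hF : F = ∅ := by
      rcases Set.eq_empty_or_nonempty F with h | ⟨p, hp⟩
      · exact h
      · exfalso
        have : ccDist p p ∈ S F := ⟨p, hp, p, hp, rfl⟩
        rw [he] at this
        exact this
    have htco : tco F = ∅ := by
      rw [hF]; ext x; simp [tco]
    rw [htco, hF]
  · by_cases hbdd : BddAbove (S F)
    · have hbdd2 : BddAbove (S (tco F)) := by
        refine ⟨sSup (S F), fun r hr => ?_⟩
        obtain ⟨r', hr', hle⟩ := hkey r hr
        exact le_trans hle (le_csSup hbdd hr')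
      refine le_antisymm ?_ (csSup_le_csSup hbdd2 hne hsub)
      have h0 : 0 ≤ sSup (S F) := by
        obtain ⟨r₀, hr₀⟩ := hne
        refine le_trans ?_ (le_csSup hbdd hr₀)
        obtain ⟨p, hp, q, hq, rfl⟩ := hr₀
        exact ccDist_nonneg p q
      refine Real.sSup_le (fun r hr => ?_) h0
      obtain ⟨r', hr', hle⟩ := hkey r hr
      exact le_trans hle (le_csSup hbdd hr')
    · have hbdd2 : ¬ BddAbove (S (tco F)) := fun h => hbdd (h.mono hsub)
      rw [Real.sSup_of_not_bddAbove hbdd, Real.sSup_of_not_bddAbove hbdd2]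
end
end
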